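/- Convexity of the MHD entropy: for γ > 1, the entropy function g(U) := −ρ log( p ρ^{−γ} ), where p := (γ−1) 𝓔(U), is a convex function on the open convex set G ⊂ ℝ⁸, and its Hessian matrix ∇²g(U) is positive definite at every U ∈ G. -/

import Mathlib

noncomputable section
namespace IdealMHD

/-- A conservative MHD state `U = (ρ, m, B, E)` identified with a vector in `ℝ⁸`. -/
abbrev State := Fin 8 → ℝ

/-- density ρ -/
def dens (U : State) : ℝ := U 0

/-- momentum components `m i`, `i = 0,1,2` -/
def mom (U : State) (i : Fin 3) : ℝ := U ⟨i.1 + 1, by omega⟩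

/-- magnetic field components `B i`, `i = 0,1,2` -/
def mag (U : State) (i : Fin 3) : ℝ := U ⟨i.1 + 4, by omega⟩

/-- total energy E -/
def toten (U : State) : ℝ := U 7

/-- squared Euclidean norm of a 3-vector -/
def sq3 (v : Fin 3 → ℝ) : ℝ := ∑ i, v i ^ 2

/-- Euclidean dot product of 3-vectors -/
def dot3 (v w : Fin 3 → ℝ) : ℝ := ∑ i, v i * w i

/-- Euclidean norm of a 3-vector -/
def norm3 (v : Fin 3 → ℝ) : ℝ := Real.sqrt (sq3 v)

/-- internal energy `𝓔(U) = E − |m|²/(2ρ) − |B|²/2` -/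
def intE (U : State) : ℝ := toten U - sq3 (mom U) / (2 * dens U) - sq3 (mag U) / 2

/-- admissible set `G = { U : ρ > 0, 𝓔(U) > 0 }` -/
def Adm : Set State := {U | 0 < dens U ∧ 0 < intE U}

/-- Euclidean dot product in `ℝ⁸` -/
def dot8 (U V : State) : ℝ := ∑ i, U i * V i

/-- the vector `n₁ = (1,0,0,0,0,0,0,0)` -/
def n1 : State := ![1, 0, 0, 0, 0, 0, 0, 0]

/-- the GQL vector `n* = (|u*|²/2, −u*, −B*, 1)` -/
def nstar (us Bs : Fin 3 → ℝ) : State :=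
  ![sq3 us / 2, -us 0, -us 1, -us 2, -Bs 0, -Bs 1, -Bs 2, 1]

/-- the ℓ-th directional ideal MHD flux `F_ℓ(U)` (with ideal-gas EOS of index γ) -/
def flux (γ : ℝ) (ℓ : Fin 3) (U : State) : State :=
  let u : Fin 3 → ℝ := fun i => mom U i / dens U
  let ptot : ℝ := (γ - 1) * intE U + sq3 (mag U) / 2
  ![mom U ℓ,
    mom U ℓ * u 0 - mag U ℓ * mag U 0 + (if ℓ = 0 then ptot else 0),
    mom U ℓ * u 1 - mag U ℓ * mag U 1 + (if ℓ = 1 then ptot else 0),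
    mom U ℓ * u 2 - mag U ℓ * mag U 2 + (if ℓ = 2 then ptot else 0),
    u ℓ * mag U 0 - mag U ℓ * u 0,
    u ℓ * mag U 1 - mag U ℓ * u 1,
    u ℓ * mag U 2 - mag U ℓ * u 2,
    u ℓ * (toten U + ptot) - mag U ℓ * dot3 u (mag U)]

/-- `C_s = p/(ρ√(2e))` with `p = (γ−1)ρe`, `e = 𝓔(U)/ρ` -/
def soundC (γ : ℝ) (U : State) : ℝ :=
  (γ - 1) * intE U / (dens U * Real.sqrt (2 * (intE U / dens U)))

/-- the discriminant `(C_s² + |B|²/ρ)² − 4 C_s² B_ℓ²/ρ` -/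
def discrim (γ : ℝ) (ℓ : Fin 3) (U : State) : ℝ :=
  (soundC γ U ^ 2 + sq3 (mag U) / dens U) ^ 2 -
    4 * soundC γ U ^ 2 * mag U ℓ ^ 2 / dens U

/-- the fast speed bound `C_ℓ` -/
def fastC (γ : ℝ) (ℓ : Fin 3) (U : State) : ℝ :=
  (1 / Real.sqrt 2) *
    Real.sqrt (soundC γ U ^ 2 + sq3 (mag U) / dens U + Real.sqrt (discrim γ ℓ U))

/-- the viscosity coefficient `α_ℓ(U, Ũ)` -/
def alphaSpeed (γ : ℝ) (ℓ : Fin 3) (U Ut : State) : ℝ :=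
  max
    (max (|mom U ℓ / dens U| + fastC γ ℓ U) (|mom Ut ℓ / dens Ut| + fastC γ ℓ Ut))
    ((Real.sqrt (dens U) * (mom U ℓ / dens U) +
        Real.sqrt (dens Ut) * (mom Ut ℓ / dens Ut)) /
        (Real.sqrt (dens U) + Real.sqrt (dens Ut)) +
      max (fastC γ ℓ U) (fastC γ ℓ Ut)) +
  norm3 (fun i => mag U i - mag Ut i) / (Real.sqrt (dens U) + Real.sqrt (dens Ut))

/-- the MHD entropy function `g(U) = −ρ log(p ρ^{−γ})` with `p = (γ−1)𝓔(U)`. -/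
def entropyFn (γ : ℝ) (U : State) : ℝ :=
  -dens U * Real.log ((γ - 1) * intE U * Real.rpow (dens U) (-γ))

/-! ### Auxiliary machinery for the entropy convexity proof -/

section EntropyAux

open Real

/-- coordinate form of the internal energy -/
lemma intE_eq (U : State) :
    intE U = U 7 - (U 1 ^ 2 + U 2 ^ 2 + U 3 ^ 2) / (2 * U 0)
      - (U 4 ^ 2 + U 5 ^ 2 + U 6 ^ 2) / 2 := by
  simp [intE, toten, sq3, mom, mag, dens, Fin.sum_univ_three]

lemma comp_line (x v : State) (s : ℝ) (i : Fin 8) : (x + s • v) i = x i + s * v i := by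
  simp [Pi.add_apply, Pi.smul_apply, smul_eq_mul]

/-- `G` is open. -/
lemma isOpen_adm : IsOpen Adm := by
  have h0 : IsOpen {U : State | 0 < U 0} :=
    isOpen_lt continuous_const (continuous_apply 0)
  have hcont : ContinuousOn intE {U : State | 0 < U 0} := by
    have h7 : Continuous fun U : State => U 7 := continuous_apply 7
    have h1 : Continuous fun U : State => U 1 ^ 2 + U 2 ^ 2 + U 3 ^ 2 := by
      continuity
    have h2 : Continuous fun U : State => U 4 ^ 2 + U 5 ^ 2 + U 6 ^ 2 := by
      continuity
    have : ContinuousOn (fun U : State =>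
        U 7 - (U 1 ^ 2 + U 2 ^ 2 + U 3 ^ 2) / (2 * U 0)
          - (U 4 ^ 2 + U 5 ^ 2 + U 6 ^ 2) / 2) {U : State | 0 < U 0} := by
      refine (h7.continuousOn.sub (h1.continuousOn.div
        ((continuous_const.mul (continuous_apply 0)).continuousOn) ?_)).sub
        ((h2.div_const 2).continuousOn)
      intro U hU
      have : (0:ℝ) < U 0 := hU
      exact (show (2:ℝ) * U 0 ≠ 0 by positivity)
    refine this.congr ?_
    intro U _
    exact intE_eq U
  have : Adm = {U : State | 0 < U 0} ∩ intE ⁻¹' Set.Ioi 0 := by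
    ext U
    simp [Adm, dens, Set.mem_setOf_eq, Set.mem_Ioi]
  rw [this]
  exact hcont.isOpen_inter_preimage h0 isOpen_Ioi

lemma cvx_pos {a b t1 t2 : ℝ} (ha : 0 ≤ a) (hb : 0 ≤ b) (hab : a + b = 1)
    (h1 : 0 < t1) (h2 : 0 < t2) : 0 < a * t1 + b * t2 := by
  rcases ha.lt_or_eq with h | h
  · exact add_pos_of_pos_of_nonneg (mul_pos h h1) (mul_nonneg hb h2.le)
  · have hb1 : b = 1 := by linarith
    simp [← h, hb1, h2]

lemma quad_div {a b p q c d : ℝ} (ha : 0 ≤ a) (hb : 0 ≤ b) (hab : a + b = 1)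
    (hc : 0 < c) (hd : 0 < d) :
    (a * p + b * q) ^ 2 / (a * c + b * d) ≤ a * (p ^ 2 / c) + b * (q ^ 2 / d) := by
  have hden : 0 < a * c + b * d := cvx_pos ha hb hab hc hd
  have hcd : 0 < c * d := mul_pos hc hd
  have key : (a * p + b * q) ^ 2 * (c * d) ≤ (a * p ^ 2 * d + b * q ^ 2 * c) * (a * c + b * d) := by
    nlinarith [mul_nonneg (mul_nonneg ha hb) (sq_nonneg (p * d - q * c))]
  calc (a * p + b * q) ^ 2 / (a * c + b * d)
      ≤ (a * p ^ 2 * d + b * q ^ 2 * c) / (c * d) := by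
        rw [div_le_div_iff₀ hden hcd]; linarith [key]
    _ = a * (p ^ 2 / c) + b * (q ^ 2 / d) := by field_simp

lemma sq_cvx {a b p q : ℝ} (ha : 0 ≤ a) (hb : 0 ≤ b) (hab : a + b = 1) :
    (a * p + b * q) ^ 2 ≤ a * p ^ 2 + b * q ^ 2 := by
  nlinarith [mul_nonneg (mul_nonneg ha hb) (sq_nonneg (p - q))]

lemma intE_concave {x y : State} (hx : 0 < x 0) (hy : 0 < y 0)
    {a b : ℝ} (ha : 0 ≤ a) (hb : 0 ≤ b) (hab : a + b = 1) :
    a * intE x + b * intE y ≤ intE (a • x + b • y) := by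
  have hz : ∀ i, (a • x + b • y) i = a * x i + b * y i := by
    intro i; simp [Pi.add_apply, Pi.smul_apply, smul_eq_mul]
  rw [intE_eq, intE_eq, intE_eq, hz 0, hz 1, hz 2, hz 3, hz 4, hz 5, hz 6, hz 7]
  have h2x : (0:ℝ) < 2 * x 0 := by linarith
  have h2y : (0:ℝ) < 2 * y 0 := by linarith
  have hm : ∀ j : Fin 8,
      (a * x j + b * y j) ^ 2 / (2 * (a * x 0 + b * y 0))
        ≤ a * (x j ^ 2 / (2 * x 0)) + b * (y j ^ 2 / (2 * y 0)) := by
    intro j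
    have := quad_div (p := x j) (q := y j) ha hb hab h2x h2y
    have heq : a * (2 * x 0) + b * (2 * y 0) = 2 * (a * x 0 + b * y 0) := by ring
    rwa [heq] at this
  have hmom : ((a * x 1 + b * y 1) ^ 2 + (a * x 2 + b * y 2) ^ 2 + (a * x 3 + b * y 3) ^ 2)
        / (2 * (a * x 0 + b * y 0))
      ≤ a * ((x 1 ^ 2 + x 2 ^ 2 + x 3 ^ 2) / (2 * x 0))
        + b * ((y 1 ^ 2 + y 2 ^ 2 + y 3 ^ 2) / (2 * y 0)) := by
    have e1 : ((a * x 1 + b * y 1) ^ 2 + (a * x 2 + b * y 2) ^ 2 + (a * x 3 + b * y 3) ^ 2)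
        / (2 * (a * x 0 + b * y 0))
        = (a * x 1 + b * y 1) ^ 2 / (2 * (a * x 0 + b * y 0))
          + (a * x 2 + b * y 2) ^ 2 / (2 * (a * x 0 + b * y 0))
          + (a * x 3 + b * y 3) ^ 2 / (2 * (a * x 0 + b * y 0)) := by ring
    have e2 : a * ((x 1 ^ 2 + x 2 ^ 2 + x 3 ^ 2) / (2 * x 0))
          + b * ((y 1 ^ 2 + y 2 ^ 2 + y 3 ^ 2) / (2 * y 0))
        = (a * (x 1 ^ 2 / (2 * x 0)) + b * (y 1 ^ 2 / (2 * y 0)))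
          + (a * (x 2 ^ 2 / (2 * x 0)) + b * (y 2 ^ 2 / (2 * y 0)))
          + (a * (x 3 ^ 2 / (2 * x 0)) + b * (y 3 ^ 2 / (2 * y 0))) := by ring
    rw [e1, e2]
    exact add_le_add (add_le_add (hm 1) (hm 2)) (hm 3)
  have hmag : ((a * x 4 + b * y 4) ^ 2 + (a * x 5 + b * y 5) ^ 2 + (a * x 6 + b * y 6) ^ 2) / 2
      ≤ a * ((x 4 ^ 2 + x 5 ^ 2 + x 6 ^ 2) / 2) + b * ((y 4 ^ 2 + y 5 ^ 2 + y 6 ^ 2) / 2) := by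
    have h4 := sq_cvx (p := x 4) (q := y 4) ha hb hab
    have h5 := sq_cvx (p := x 5) (q := y 5) ha hb hab
    have h6 := sq_cvx (p := x 6) (q := y 6) ha hb hab
    linarith
  linarith

lemma convex_adm : Convex ℝ Adm := by
  intro x hx y hy a b ha hb hab
  obtain ⟨hx0, hxE⟩ := hx
  obtain ⟨hy0, hyE⟩ := hy
  have hz : ∀ i, (a • x + b • y) i = a * x i + b * y i := by
    intro i; simp [Pi.add_apply, Pi.smul_apply, smul_eq_mul]
  constructor
  · show 0 < (a • x + b • y) 0
    rw [hz 0]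
    exact cvx_pos ha hb hab hx0 hy0
  · have h1 := intE_concave hx0 hy0 ha hb hab
    have h2 : 0 < a * intE x + b * intE y := cvx_pos ha hb hab hxE hyE
    exact lt_of_lt_of_le h2 h1

end EntropyAux

section LineAux

open Real

/-! auxiliary functions along the line `s ↦ x + s • v` -/

def aP (x v : State) (s : ℝ) : ℝ := x 0 + s * v 0
def aM1 (x v : State) (s : ℝ) : ℝ := x 1 + s * v 1
def aM2 (x v : State) (s : ℝ) : ℝ := x 2 + s * v 2
def aM3 (x v : State) (s : ℝ) : ℝ := x 3 + s * v 3
def aB1 (x v : State) (s : ℝ) : ℝ := x 4 + s * v 4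
def aB2 (x v : State) (s : ℝ) : ℝ := x 5 + s * v 5
def aB3 (x v : State) (s : ℝ) : ℝ := x 6 + s * v 6
def aN (x v : State) (s : ℝ) : ℝ := aM1 x v s ^ 2 + aM2 x v s ^ 2 + aM3 x v s ^ 2
def aK (x v : State) (s : ℝ) : ℝ := aB1 x v s ^ 2 + aB2 x v s ^ 2 + aB3 x v s ^ 2
def aEps (x v : State) (s : ℝ) : ℝ := (x 7 + s * v 7) - aN x v s / (2 * aP x v s) - aK x v s / 2
def aN' (x v : State) (s : ℝ) : ℝ :=
  v 1 * aM1 x v s + aM1 x v s * v 1 + (v 2 * aM2 x v s + aM2 x v s * v 2)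
    + (v 3 * aM3 x v s + aM3 x v s * v 3)
def aK' (x v : State) (s : ℝ) : ℝ :=
  v 4 * aB1 x v s + aB1 x v s * v 4 + (v 5 * aB2 x v s + aB2 x v s * v 5)
    + (v 6 * aB3 x v s + aB3 x v s * v 6)
def aSmu (v : State) : ℝ := v 1 ^ 2 + v 2 ^ 2 + v 3 ^ 2
def aSb (v : State) : ℝ := v 4 ^ 2 + v 5 ^ 2 + v 6 ^ 2
def aQ1 (x v : State) (s : ℝ) : ℝ := aN' x v s * (2 * aP x v s) - aN x v s * (2 * v 0)
def aD (x v : State) (s : ℝ) : ℝ := (2 * aP x v s) ^ 2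
def aEps' (x v : State) (s : ℝ) : ℝ := v 7 - aQ1 x v s / aD x v s - aK' x v s / 2
def aT (x v : State) (s : ℝ) : ℝ :=
  (v 1 - v 0 / aP x v s * aM1 x v s) ^ 2 + (v 2 - v 0 / aP x v s * aM2 x v s) ^ 2
    + (v 3 - v 0 / aP x v s * aM3 x v s) ^ 2
def aEps'' (x v : State) (s : ℝ) : ℝ := -(aT x v s / aP x v s) - aSb v
def aA (γ : ℝ) (x v : State) (s : ℝ) : ℝ :=
  Real.log (γ - 1) + Real.log (aEps x v s) - γ * Real.log (aP x v s)
def aBr (γ : ℝ) (x v : State) (s : ℝ) : ℝ :=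
  aEps' x v s / aEps x v s - γ * (v 0 / aP x v s)
def aG1 (γ : ℝ) (x v : State) (s : ℝ) : ℝ := -(v 0) * aA γ x v s - aP x v s * aBr γ x v s
def aG2 (γ : ℝ) (x v : State) (s : ℝ) : ℝ :=
  (γ - 1) * v 0 ^ 2 / aP x v s
    + aP x v s * (v 0 / aP x v s - aEps' x v s / aEps x v s) ^ 2
    + (aT x v s + aP x v s * aSb v) / aEps x v s

lemma haffine (c d s : ℝ) : HasDerivAt (fun s => c + s * d) d s := by
  simpa using ((hasDerivAt_id s).mul_const d).const_add c

lemma hasDerivAt_aP (x v : State) (s : ℝ) : HasDerivAt (aP x v) (v 0) s := haffine _ _ s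
lemma hasDerivAt_aM1 (x v : State) (s : ℝ) : HasDerivAt (aM1 x v) (v 1) s := haffine _ _ s
lemma hasDerivAt_aM2 (x v : State) (s : ℝ) : HasDerivAt (aM2 x v) (v 2) s := haffine _ _ s
lemma hasDerivAt_aM3 (x v : State) (s : ℝ) : HasDerivAt (aM3 x v) (v 3) s := haffine _ _ s
lemma hasDerivAt_aB1 (x v : State) (s : ℝ) : HasDerivAt (aB1 x v) (v 4) s := haffine _ _ s
lemma hasDerivAt_aB2 (x v : State) (s : ℝ) : HasDerivAt (aB2 x v) (v 5) s := haffine _ _ s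
lemma hasDerivAt_aB3 (x v : State) (s : ℝ) : HasDerivAt (aB3 x v) (v 6) s := haffine _ _ s

lemma hasDerivAt_aN (x v : State) (s : ℝ) : HasDerivAt (aN x v) (aN' x v s) s := by
  have h := (((hasDerivAt_aM1 x v s).mul (hasDerivAt_aM1 x v s)).add
    ((hasDerivAt_aM2 x v s).mul (hasDerivAt_aM2 x v s))).add
    ((hasDerivAt_aM3 x v s).mul (hasDerivAt_aM3 x v s))
  have he : aN x v = fun s => aM1 x v s * aM1 x v s + aM2 x v s * aM2 x v s
      + aM3 x v s * aM3 x v s := by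
    funext t; simp [aN]; ring
  rw [he]
  exact h

lemma hasDerivAt_aK (x v : State) (s : ℝ) : HasDerivAt (aK x v) (aK' x v s) s := by
  have h := (((hasDerivAt_aB1 x v s).mul (hasDerivAt_aB1 x v s)).add
    ((hasDerivAt_aB2 x v s).mul (hasDerivAt_aB2 x v s))).add
    ((hasDerivAt_aB3 x v s).mul (hasDerivAt_aB3 x v s))
  have he : aK x v = fun s => aB1 x v s * aB1 x v s + aB2 x v s * aB2 x v s
      + aB3 x v s * aB3 x v s := by
    funext t; simp [aK]; ring
  rw [he]
  exact h

lemma hasDerivAt_aN' (x v : State) (s : ℝ) : HasDerivAt (aN' x v) (2 * aSmu v) s := by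
  have h1 : HasDerivAt (fun s => v 1 * aM1 x v s + aM1 x v s * v 1) (v 1 * v 1 + v 1 * v 1) s :=
    ((hasDerivAt_aM1 x v s).const_mul (v 1)).add ((hasDerivAt_aM1 x v s).mul_const (v 1))
  have h2 : HasDerivAt (fun s => v 2 * aM2 x v s + aM2 x v s * v 2) (v 2 * v 2 + v 2 * v 2) s :=
    ((hasDerivAt_aM2 x v s).const_mul (v 2)).add ((hasDerivAt_aM2 x v s).mul_const (v 2))
  have h3 : HasDerivAt (fun s => v 3 * aM3 x v s + aM3 x v s * v 3) (v 3 * v 3 + v 3 * v 3) s :=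
    ((hasDerivAt_aM3 x v s).const_mul (v 3)).add ((hasDerivAt_aM3 x v s).mul_const (v 3))
  have h := (h1.add h2).add h3
  refine h.congr_deriv (Eq.symm ?_)
  simp [aSmu]; ring

lemma hasDerivAt_aK' (x v : State) (s : ℝ) : HasDerivAt (aK' x v) (2 * aSb v) s := by
  have h1 : HasDerivAt (fun s => v 4 * aB1 x v s + aB1 x v s * v 4) (v 4 * v 4 + v 4 * v 4) s :=
    ((hasDerivAt_aB1 x v s).const_mul (v 4)).add ((hasDerivAt_aB1 x v s).mul_const (v 4))
  have h2 : HasDerivAt (fun s => v 5 * aB2 x v s + aB2 x v s * v 5) (v 5 * v 5 + v 5 * v 5) s :=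
    ((hasDerivAt_aB2 x v s).const_mul (v 5)).add ((hasDerivAt_aB2 x v s).mul_const (v 5))
  have h3 : HasDerivAt (fun s => v 6 * aB3 x v s + aB3 x v s * v 6) (v 6 * v 6 + v 6 * v 6) s :=
    ((hasDerivAt_aB3 x v s).const_mul (v 6)).add ((hasDerivAt_aB3 x v s).mul_const (v 6))
  have h := (h1.add h2).add h3
  refine h.congr_deriv (Eq.symm ?_)
  simp [aSb]; ring

lemma hasDerivAt_a2P (x v : State) (s : ℝ) :
    HasDerivAt (fun s => 2 * aP x v s) (2 * v 0) s :=
  (hasDerivAt_aP x v s).const_mul 2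

lemma hasDerivAt_aEps (x v : State) (s : ℝ) (hP : aP x v s ≠ 0) :
    HasDerivAt (aEps x v) (aEps' x v s) s := by
  have h2P : (2 : ℝ) * aP x v s ≠ 0 := by
    simpa using mul_ne_zero two_ne_zero hP
  have hq : HasDerivAt (fun s => aN x v s / (2 * aP x v s))
      (aQ1 x v s / aD x v s) s :=
    (hasDerivAt_aN x v s).div (hasDerivAt_a2P x v s) h2P
  have hE : HasDerivAt (fun s => x 7 + s * v 7) (v 7) s := haffine _ _ s
  have h := (hE.sub hq).sub ((hasDerivAt_aK x v s).div_const 2)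
  exact h

lemma hasDerivAt_aQ1 (x v : State) (s : ℝ) :
    HasDerivAt (aQ1 x v)
      (2 * aSmu v * (2 * aP x v s) + aN' x v s * (2 * v 0) - aN' x v s * (2 * v 0)) s := by
  exact ((hasDerivAt_aN' x v s).mul (hasDerivAt_a2P x v s)).sub
    ((hasDerivAt_aN x v s).mul_const (2 * v 0))

lemma hasDerivAt_aD (x v : State) (s : ℝ) :
    HasDerivAt (aD x v) (2 * (2 * aP x v s) * (2 * v 0)) s := by
  have := (hasDerivAt_a2P x v s).pow 2
  refine this.congr_deriv (Eq.symm ?_)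
  push_cast
  ring

lemma hasDerivAt_aEps' (x v : State) (s : ℝ) (hP : aP x v s ≠ 0) :
    HasDerivAt (aEps' x v) (aEps'' x v s) s := by
  have hD : aD x v s ≠ 0 := by
    simp only [aD]
    positivity
  have hq : HasDerivAt (fun s => aQ1 x v s / aD x v s)
      (((2 * aSmu v * (2 * aP x v s) + aN' x v s * (2 * v 0) - aN' x v s * (2 * v 0))
          * aD x v s - aQ1 x v s * (2 * (2 * aP x v s) * (2 * v 0))) / aD x v s ^ 2) s :=
    (hasDerivAt_aQ1 x v s).div (hasDerivAt_aD x v s) hD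
  have h := ((hasDerivAt_const s (v 7)).sub hq).sub ((hasDerivAt_aK' x v s).div_const 2)
  have he : aEps' x v = fun s => v 7 - aQ1 x v s / aD x v s - aK' x v s / 2 := rfl
  rw [he]
  refine h.congr_deriv (Eq.symm ?_)
  have key : ((2 * aSmu v * (2 * aP x v s) + aN' x v s * (2 * v 0) - aN' x v s * (2 * v 0))
          * aD x v s - aQ1 x v s * (2 * (2 * aP x v s) * (2 * v 0))) / aD x v s ^ 2
      = aT x v s / aP x v s := by
    have hP' : aP x v s ≠ 0 := hP
    simp only [aD, aQ1, aT, aN, aN', aSmu]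
    field_simp
    ring
  rw [key]
  simp only [aEps'']
  ring

lemma hasDerivAt_aG1 (γ : ℝ) (x v : State) (s : ℝ)
    (hP : 0 < aP x v s) (hE : 0 < aEps x v s) :
    HasDerivAt (aG1 γ x v) (aG2 γ x v s) s := by
  have hPne : aP x v s ≠ 0 := ne_of_gt hP
  have hEne : aEps x v s ≠ 0 := ne_of_gt hE
  have hA : HasDerivAt (aA γ x v) (aBr γ x v s) s := by
    have h := (((hasDerivAt_aEps x v s hPne).log hEne).const_add (Real.log (γ - 1))).sub
      (((hasDerivAt_aP x v s).log hPne).const_mul γ)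
    have he : aA γ x v = fun s => Real.log (γ - 1) + Real.log (aEps x v s)
        - γ * Real.log (aP x v s) := rfl
    rw [he]
    refine h.congr_deriv (Eq.symm ?_) <;> simp [aBr]
  have hBr : HasDerivAt (aBr γ x v)
      ((aEps'' x v s * aEps x v s - aEps' x v s * aEps' x v s) / aEps x v s ^ 2
        - γ * ((0 * aP x v s - v 0 * v 0) / aP x v s ^ 2)) s := by
    exact ((hasDerivAt_aEps' x v s hPne).div (hasDerivAt_aEps x v s hPne) hEne).sub
      (((hasDerivAt_const s (v 0)).div (hasDerivAt_aP x v s) hPne).const_mul γ)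
  have h := (hA.const_mul (-(v 0))).sub ((hasDerivAt_aP x v s).mul hBr)
  have he : aG1 γ x v = fun s => -(v 0) * aA γ x v s - aP x v s * aBr γ x v s := rfl
  rw [he]
  refine h.congr_deriv (Eq.symm ?_)
  simp only [aG2, aBr, aEps'']
  field_simp
  ring

lemma aG2_nonneg {γ : ℝ} (hγ : 1 < γ) (x v : State) (s : ℝ)
    (hP : 0 < aP x v s) (hE : 0 < aEps x v s) : 0 ≤ aG2 γ x v s := by
  have h1 : 0 ≤ (γ - 1) * v 0 ^ 2 / aP x v s := by
    apply div_nonneg _ hP.le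
    apply mul_nonneg (by linarith) (sq_nonneg _)
  have h2 : 0 ≤ aP x v s * (v 0 / aP x v s - aEps' x v s / aEps x v s) ^ 2 :=
    mul_nonneg hP.le (sq_nonneg _)
  have hT : 0 ≤ aT x v s := by unfold aT; positivity
  have hSb : 0 ≤ aSb v := by unfold aSb; positivity
  have h3 : 0 ≤ (aT x v s + aP x v s * aSb v) / aEps x v s :=
    div_nonneg (by nlinarith) hE.le
  unfold aG2
  linarith

lemma aG2_pos {γ : ℝ} (hγ : 1 < γ) (x v : State) (s : ℝ)
    (hP : 0 < aP x v s) (hE : 0 < aEps x v s) (hv : v ≠ 0) : 0 < aG2 γ x v s := by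
  have hT : 0 ≤ aT x v s := by unfold aT; positivity
  have hSb : 0 ≤ aSb v := by unfold aSb; positivity
  have h1 : 0 ≤ (γ - 1) * v 0 ^ 2 / aP x v s := by
    apply div_nonneg _ hP.le
    apply mul_nonneg (by linarith) (sq_nonneg _)
  have h2 : 0 ≤ aP x v s * (v 0 / aP x v s - aEps' x v s / aEps x v s) ^ 2 :=
    mul_nonneg hP.le (sq_nonneg _)
  have h3 : 0 ≤ (aT x v s + aP x v s * aSb v) / aEps x v s :=
    div_nonneg (by nlinarith) hE.le
  by_cases h0 : v 0 = 0
  · by_cases hB : v 4 = 0 ∧ v 5 = 0 ∧ v 6 = 0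
    · by_cases hM : v 1 = 0 ∧ v 2 = 0 ∧ v 3 = 0
      · -- only v 7 can be nonzero
        have h7 : v 7 ≠ 0 := by
          intro h7
          apply hv
          funext i
          fin_cases i <;> simp_all
        have hEps' : aEps' x v s = v 7 := by
          simp [aEps', aQ1, aK', aN', aN, h0, hM.1, hM.2.1, hM.2.2, hB.1, hB.2.1, hB.2.2]
        have hmid : 0 < aP x v s * (v 0 / aP x v s - aEps' x v s / aEps x v s) ^ 2 := by
          apply mul_pos hP
          have : aEps' x v s / aEps x v s ≠ 0 := by
            rw [hEps']
            exact div_ne_zero h7 (ne_of_gt hE)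
          have hne : v 0 / aP x v s - aEps' x v s / aEps x v s ≠ 0 := by
            rw [h0]
            simpa using this
          exact lt_of_le_of_ne (sq_nonneg _) (Ne.symm (pow_ne_zero 2 hne))
        unfold aG2
        linarith
      · -- some momentum direction component nonzero; with v 0 = 0, aT > 0
        have hTpos : 0 < aT x v s := by
          have he : aT x v s = v 1 ^ 2 + v 2 ^ 2 + v 3 ^ 2 := by
            simp [aT, h0]
          rw [he]
          rcases not_and_or.mp hM with h | h
          · have := lt_of_le_of_ne (sq_nonneg (v 1)) (Ne.symm (pow_ne_zero 2 h))
            nlinarith [sq_nonneg (v 2), sq_nonneg (v 3)]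
          rcases not_and_or.mp h with h | h
          · have := lt_of_le_of_ne (sq_nonneg (v 2)) (Ne.symm (pow_ne_zero 2 h))
            nlinarith [sq_nonneg (v 1), sq_nonneg (v 3)]
          · have := lt_of_le_of_ne (sq_nonneg (v 3)) (Ne.symm (pow_ne_zero 2 h))
            nlinarith [sq_nonneg (v 1), sq_nonneg (v 2)]
        have h3' : 0 < (aT x v s + aP x v s * aSb v) / aEps x v s := by
          apply div_pos _ hE
          nlinarith
        unfold aG2
        linarith
    · -- some magnetic component nonzero
      have hSbpos : 0 < aSb v := by
        unfold aSb
        rcases not_and_or.mp hB with h | h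
        · have := lt_of_le_of_ne (sq_nonneg (v 4)) (Ne.symm (pow_ne_zero 2 h))
          nlinarith [sq_nonneg (v 5), sq_nonneg (v 6)]
        rcases not_and_or.mp h with h | h
        · have := lt_of_le_of_ne (sq_nonneg (v 5)) (Ne.symm (pow_ne_zero 2 h))
          nlinarith [sq_nonneg (v 4), sq_nonneg (v 6)]
        · have := lt_of_le_of_ne (sq_nonneg (v 6)) (Ne.symm (pow_ne_zero 2 h))
          nlinarith [sq_nonneg (v 4), sq_nonneg (v 5)]
      have h3' : 0 < (aT x v s + aP x v s * aSb v) / aEps x v s := by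
        apply div_pos _ hE
        nlinarith
      unfold aG2
      linarith
  · -- v 0 ≠ 0
    have h1' : 0 < (γ - 1) * v 0 ^ 2 / aP x v s := by
      apply div_pos _ hP
      apply mul_pos (by linarith)
      exact lt_of_le_of_ne (sq_nonneg _) (Ne.symm (pow_ne_zero 2 h0))
    unfold aG2
    linarith

end LineAux

section MainAux

open Real Filter Topology

lemma aP_eq (x v : State) (s : ℝ) : dens (x + s • v) = aP x v s := by
  simp [dens, aP, Pi.add_apply, Pi.smul_apply, smul_eq_mul]

lemma aEps_eq (x v : State) (s : ℝ) : intE (x + s • v) = aEps x v s := by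
  rw [intE_eq]
  simp only [aEps, aN, aK, aM1, aM2, aM3, aB1, aB2, aB3, aP, Pi.add_apply, Pi.smul_apply,
    smul_eq_mul]

lemma mem_line {x v : State} {s : ℝ} (h : x + s • v ∈ Adm) :
    0 < aP x v s ∧ 0 < aEps x v s := by
  obtain ⟨h1, h2⟩ := h
  rw [aP_eq x v s] at h1
  rw [aEps_eq x v s] at h2
  exact ⟨h1, h2⟩

lemma entropy_line {γ : ℝ} (hγ : 1 < γ) (x v : State) {s : ℝ} (h : x + s • v ∈ Adm) :
    entropyFn γ (x + s • v) = -(aP x v s) * aA γ x v s := by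
  obtain ⟨hP, hE⟩ := mem_line h
  have hγ1 : (0:ℝ) < γ - 1 := by linarith
  rw [entropyFn, aP_eq, aEps_eq]
  have hrpow : Real.rpow (aP x v s) (-γ) = aP x v s ^ (-γ) := rfl
  rw [hrpow]
  have h1 : (γ - 1) * aEps x v s ≠ 0 := by positivity
  have h2 : aP x v s ^ (-γ) ≠ 0 := by
    exact ne_of_gt (Real.rpow_pos_of_pos hP _)
  rw [Real.log_mul h1 h2, Real.log_mul (ne_of_gt hγ1) (ne_of_gt hE), Real.log_rpow hP]
  simp only [aA]
  ring

/-- the set of parameters `s` for which `x + s • v` is admissible is open -/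
lemma isOpen_lineSet (x v : State) : IsOpen {s : ℝ | x + s • v ∈ Adm} := by
  have : Continuous fun s : ℝ => x + s • v :=
    continuous_const.add (continuous_id.smul continuous_const)
  exact isOpen_adm.preimage this

/-- main one-dimensional lemma: first and second derivatives along lines -/
lemma line_deriv {γ : ℝ} (hγ : 1 < γ) (x v : State) {s : ℝ} (h : x + s • v ∈ Adm) :
    HasDerivAt (fun t => entropyFn γ (x + t • v)) (aG1 γ x v s) s ∧
    HasDerivAt (aG1 γ x v) (aG2 γ x v s) s := by
  obtain ⟨hP, hE⟩ := mem_line h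
  constructor
  · have hG : HasDerivAt (fun t => -(aP x v t) * aA γ x v t) (aG1 γ x v s) s := by
      have hA : HasDerivAt (aA γ x v) (aBr γ x v s) s := by
        have hl := (((hasDerivAt_aEps x v s (ne_of_gt hP)).log
          (ne_of_gt hE)).const_add (Real.log (γ - 1))).sub
          (((hasDerivAt_aP x v s).log (ne_of_gt hP)).const_mul γ)
        have he : aA γ x v = fun s => Real.log (γ - 1) + Real.log (aEps x v s)
            - γ * Real.log (aP x v s) := rfl
        rw [he]
        refine hl.congr_deriv (Eq.symm ?_) <;> simp [aBr]
      have h' := ((hasDerivAt_aP x v s).neg).mul hA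
      refine h'.congr_deriv (Eq.symm ?_)
      simp only [aG1, aBr, Pi.neg_apply]
      ring
    refine hG.congr_of_eventuallyEq ?_
    have hmem : {s : ℝ | x + s • v ∈ Adm} ∈ 𝓝 s :=
      (isOpen_lineSet x v).mem_nhds h
    filter_upwards [hmem] with t ht
    exact entropy_line hγ x v ht
  · exact hasDerivAt_aG1 γ x v s hP hE

/-- smoothness of the entropy on the admissible set -/
lemma contDiffAt_entropy {γ : ℝ} (hγ : 1 < γ) {U : State} (hU : U ∈ Adm) :
    ContDiffAt ℝ 2 (entropyFn γ) U := by
  obtain ⟨hρ, hE⟩ := hU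
  have hρ' : (0:ℝ) < U 0 := hρ
  have hproj : ∀ i : Fin 8, ContDiffAt ℝ 2 (fun W : State => W i) U := fun i =>
    (ContinuousLinearMap.proj (R := ℝ) (φ := fun _ : Fin 8 => ℝ) i).contDiff.contDiffAt
  have hintE : ContDiffAt ℝ 2 intE U := by
    have h1 : ContDiffAt ℝ 2 (fun W : State =>
        W 7 - (W 1 ^ 2 + W 2 ^ 2 + W 3 ^ 2) / (2 * W 0)
          - (W 4 ^ 2 + W 5 ^ 2 + W 6 ^ 2) / 2) U := by
      refine ContDiffAt.sub (ContDiffAt.sub (hproj 7) (ContDiffAt.div ?_ ?_ ?_)) ?_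
      · exact (((hproj 1).pow 2).add ((hproj 2).pow 2)).add ((hproj 3).pow 2)
      · exact (contDiffAt_const (c := (2:ℝ))).mul (hproj 0)
      · positivity
      · exact ((((hproj 4).pow 2).add ((hproj 5).pow 2)).add ((hproj 6).pow 2)).div_const 2
    have : intE = fun W : State => W 7 - (W 1 ^ 2 + W 2 ^ 2 + W 3 ^ 2) / (2 * W 0)
        - (W 4 ^ 2 + W 5 ^ 2 + W 6 ^ 2) / 2 := funext intE_eq
    rw [this]
    exact h1
  have hdens : ContDiffAt ℝ 2 dens U := hproj 0
  have harg : ContDiffAt ℝ 2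
      (fun W : State => (γ - 1) * intE W * Real.rpow (dens W) (-γ)) U := by
    refine ContDiffAt.mul ((contDiffAt_const (c := γ - 1)).mul hintE) ?_
    exact hdens.rpow_const_of_ne (ne_of_gt hρ')
  have hpos : (γ - 1) * intE U * Real.rpow (dens U) (-γ) ≠ 0 := by
    have h1 : (0:ℝ) < γ - 1 := by linarith
    have h2 : (0:ℝ) < Real.rpow (dens U) (-γ) := Real.rpow_pos_of_pos hρ _
    positivity
  have hlog : ContDiffAt ℝ 2
      (fun W : State => Real.log ((γ - 1) * intE W * Real.rpow (dens W) (-γ))) U :=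
    ContDiffAt.comp (g := Real.log) U (Real.contDiffAt_log.mpr hpos) harg
  have : entropyFn γ = fun W : State =>
      -dens W * Real.log ((γ - 1) * intE W * Real.rpow (dens W) (-γ)) := rfl
  rw [this]
  exact (hdens.neg).mul hlog

end MainAux

open Real Filter Topology in
theorem entropy_convex (γ : ℝ) (hγ : 1 < γ) :
    (IsOpen Adm ∧ Convex ℝ Adm) ∧ ConvexOn ℝ Adm (entropyFn γ) ∧
      ∀ U ∈ Adm, ∀ v : State, v ≠ 0 →
        0 < iteratedFDeriv ℝ 2 (entropyFn γ) U ![v, v] := by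
  refine ⟨⟨isOpen_adm, convex_adm⟩, ?_, ?_⟩
  · -- convexity on Adm
    refine ⟨convex_adm, ?_⟩
    intro x hx y hy a b ha hb hab
    set v : State := y - x with hv
    have hseg : ∀ t : ℝ, t ∈ Set.Icc (0:ℝ) 1 → x + t • v ∈ Adm := by
      intro t ht
      have : x + t • v = (1 - t) • x + t • y := by
        funext i
        simp [hv, Pi.add_apply, Pi.smul_apply, Pi.sub_apply, smul_eq_mul]
        ring
      rw [this]
      exact convex_adm hx hy (by linarith [ht.1, ht.2]) ht.1 (by ring)
    have hcvx : ConvexOn ℝ (Set.Icc (0:ℝ) 1) (fun t => entropyFn γ (x + t • v)) := by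
      refine convexOn_of_hasDerivWithinAt2_nonneg (f' := aG1 γ x v) (f'' := aG2 γ x v) (convex_Icc 0 1) ?_ ?_ ?_ ?_
      · intro t ht
        exact ((line_deriv hγ x v (hseg t ht)).1).continuousAt.continuousWithinAt
      · intro t ht
        rw [interior_Icc] at ht
        exact ((line_deriv hγ x v (hseg t ⟨ht.1.le, ht.2.le⟩)).1).hasDerivWithinAt
      · intro t ht
        rw [interior_Icc] at ht
        exact ((line_deriv hγ x v (hseg t ⟨ht.1.le, ht.2.le⟩)).2).hasDerivWithinAt
      · intro t ht
        rw [interior_Icc] at ht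
        obtain ⟨hP, hE⟩ := mem_line (hseg t ⟨ht.1.le, ht.2.le⟩)
        exact aG2_nonneg hγ x v t hP hE
    have h01 : (0:ℝ) ∈ Set.Icc (0:ℝ) 1 := by constructor <;> norm_num
    have h11 : (1:ℝ) ∈ Set.Icc (0:ℝ) 1 := by constructor <;> norm_num
    have key := hcvx.2 h01 h11 ha hb hab
    simp only [smul_eq_mul, mul_zero, mul_one, zero_add] at key
    have e0 : x + (0:ℝ) • v = x := by simp
    have e1 : x + (1:ℝ) • v = y := by
      funext i; simp [hv, Pi.add_apply, Pi.smul_apply, Pi.sub_apply, smul_eq_mul]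
    have eb : x + b • v = a • x + b • y := by
      funext i
      simp [hv, Pi.add_apply, Pi.smul_apply, Pi.sub_apply, smul_eq_mul]
      linear_combination (-(x i)) * hab
    rw [e0, e1, eb] at key
    simpa [smul_eq_mul] using key
  · -- positive definite Hessian
    intro U hU v hv
    rw [iteratedFDeriv_two_apply]
    simp only [Matrix.cons_val_zero, Matrix.cons_val_one, Matrix.head_cons]
    set f := entropyFn γ with hf
    have hC2 : ContDiffAt ℝ 2 f U := contDiffAt_entropy hγ hU
    have hd1 : ContDiffAt ℝ 1 (fderiv ℝ f) U := hC2.fderiv_right (by norm_num)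
    have hdiff : DifferentiableAt ℝ (fderiv ℝ f) U := hd1.differentiableAt one_ne_zero
    set φ : State → ℝ := fun y => fderiv ℝ f y v with hφdef
    have hφ : DifferentiableAt ℝ φ U := by
      have := (ContinuousLinearMap.apply ℝ ℝ v).differentiableAt.comp U hdiff
      exact this
    have hline : ∀ s : ℝ, HasDerivAt (fun t : ℝ => U + t • v) v s := by
      intro s
      have := ((hasDerivAt_id s).smul_const v).const_add U
      simpa using this
    -- step 1: fderiv φ U v = deriv (fun s => φ (U + s • v)) 0
    have hU0 : U + (0:ℝ) • v = U := by simp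
    have hcomp : HasDerivAt (fun s : ℝ => φ (U + s • v)) (fderiv ℝ φ U v) 0 := by
      have h1 : HasFDerivAt φ (fderiv ℝ φ U) (U + (0:ℝ) • v) := by
        rw [hU0]; exact hφ.hasFDerivAt
      exact h1.comp_hasDerivAt 0 (hline 0)
    -- step 2: identify φ along the line with aG1
    have hEq : (fun s : ℝ => φ (U + s • v)) =ᶠ[𝓝 0] aG1 γ U v := by
      have hmem : {s : ℝ | U + s • v ∈ Adm} ∈ 𝓝 (0:ℝ) := by
        apply (isOpen_lineSet U v).mem_nhds
        show U + (0:ℝ) • v ∈ Adm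
        rw [hU0]; exact hU
      filter_upwards [hmem] with s hs
      have hda : DifferentiableAt ℝ f (U + s • v) :=
        (contDiffAt_entropy hγ hs).differentiableAt (by norm_num)
      have h1 : HasDerivAt (fun t => f (U + t • v)) (φ (U + s • v)) s :=
        by have h0 := hda.hasFDerivAt.comp_hasDerivAt s (hline s); exact h0
      have h2 : HasDerivAt (fun t => f (U + t • v)) (aG1 γ U v s) s :=
        (line_deriv hγ U v hs).1
      exact h1.unique h2
    have hd0 : deriv (fun s : ℝ => φ (U + s • v)) 0 = deriv (aG1 γ U v) 0 :=
      hEq.deriv_eq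
    have hUAdm : U + (0:ℝ) • v ∈ Adm := by rw [hU0]; exact hU
    have hg2 : deriv (aG1 γ U v) 0 = aG2 γ U v 0 :=
      ((line_deriv hγ U v hUAdm).2).deriv
    -- step 3: fderiv (fderiv f) U v v = fderiv φ U v
    have hflip : fderiv ℝ (fderiv ℝ f) U v v = fderiv ℝ φ U v := by
      have := fderiv_clm_apply (c := fderiv ℝ f) (u := fun _ : State => v)
        hdiff (differentiableAt_const v)
      rw [hφdef]
      rw [this]
      simp
    rw [hflip, ← hcomp.deriv, hd0, hg2]
    obtain ⟨hP, hE⟩ := mem_line hUAdm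
    exact aG2_pos hγ U v 0 hP hE hv


end IdealMHD
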